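/- Let k ∈ ℕ, t_j = cos(jπ/k) for j = 0,…,k be the Chebyshev nodes, and p_i(t) = ∏_{j ≠ i} (t − t_j). Then for every i ∈ {0,…,k} and every t ∈ (−1, 1), |p_i(t)/p_i(t_i)| ≤ 2. -/

import Mathlib

open Real Polynomial Finset

namespace ChebBoundAux



lemma U_facts (n : ℕ) : (Polynomial.Chebyshev.U ℝ (n : ℤ)).natDegree ≤ n ∧
    (Polynomial.Chebyshev.U ℝ (n : ℤ)).coeff n = 2 ^ n := by
  induction n using Nat.twoStepInduction with
  | zero => simp [Polynomial.Chebyshev.U_zero]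
  | one =>
    refine ⟨(by simp [Polynomial.Chebyshev.U_one]), ?_⟩
    have : Polynomial.Chebyshev.U ℝ ((1:ℕ) : ℤ) = C 2 * X := by
      have h := Polynomial.Chebyshev.U_one ℝ
      rw [map_ofNat]
      simpa using h
    simp [this]
  | more n ih1 ih2 =>
    have hrec : Polynomial.Chebyshev.U ℝ ((n + 2 : ℕ) : ℤ)
        = 2 * X * Polynomial.Chebyshev.U ℝ ((n + 1 : ℕ) : ℤ)
          - Polynomial.Chebyshev.U ℝ (n : ℤ) := by
      push_cast
      exact Polynomial.Chebyshev.U_add_two ℝ (n : ℤ)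
    constructor
    · rw [hrec]
      refine (natDegree_sub_le _ _).trans (max_le ?_ (ih1.1.trans (by omega)))
      refine natDegree_mul_le.trans ?_
      have h1 : (2 * X : ℝ[X]).natDegree ≤ 1 := natDegree_mul_le.trans (by simp)
      omega
    · have hco : (Polynomial.Chebyshev.U ℝ (n : ℤ)).coeff (n + 2) = 0 :=
        coeff_eq_zero_of_natDegree_lt (by omega)
      rw [hrec, coeff_sub, mul_assoc, (map_ofNat C 2).symm, coeff_C_mul, coeff_X_mul, ih2.2,
        hco]
      ring

lemma U_natDegree (n : ℕ) : (Polynomial.Chebyshev.U ℝ (n : ℤ)).natDegree = n :=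
  le_antisymm (U_facts n).1 (le_natDegree_of_ne_zero (by rw [(U_facts n).2]; positivity))

lemma U_leadingCoeff (n : ℕ) : (Polynomial.Chebyshev.U ℝ (n : ℤ)).leadingCoeff = 2 ^ n := by
  rw [leadingCoeff, U_natDegree, (U_facts n).2]

lemma U_ne_zero (n : ℕ) : (Polynomial.Chebyshev.U ℝ (n : ℤ)) ≠ 0 := by
  intro h
  have := U_leadingCoeff n
  rw [h] at this
  simp only [leadingCoeff_zero] at this
  have : (0:ℝ) < 2 ^ n := by positivity
  linarith

lemma U_eval_one (n : ℕ) : (Polynomial.Chebyshev.U ℝ (n : ℤ)).eval 1 = n + 1 := by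
  induction n using Nat.twoStepInduction with
  | zero => simp [Polynomial.Chebyshev.U_zero]
  | one => simp [Polynomial.Chebyshev.U_one]; norm_num
  | more n ih1 ih2 =>
    have hrec : Polynomial.Chebyshev.U ℝ ((n + 2 : ℕ) : ℤ)
        = 2 * X * Polynomial.Chebyshev.U ℝ ((n + 1 : ℕ) : ℤ)
          - Polynomial.Chebyshev.U ℝ (n : ℤ) := by
      push_cast; exact Polynomial.Chebyshev.U_add_two ℝ (n : ℤ)
    rw [hrec]
    simp only [eval_sub, eval_mul, eval_ofNat, eval_X, ih1, ih2]
    push_cast; ring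

lemma U_eval_neg_one (n : ℕ) : (Polynomial.Chebyshev.U ℝ (n : ℤ)).eval (-1)
    = (-1) ^ n * (n + 1) := by
  induction n using Nat.twoStepInduction with
  | zero => simp [Polynomial.Chebyshev.U_zero]
  | one => simp [Polynomial.Chebyshev.U_one]; norm_num
  | more n ih1 ih2 =>
    have hrec : Polynomial.Chebyshev.U ℝ ((n + 2 : ℕ) : ℤ)
        = 2 * X * Polynomial.Chebyshev.U ℝ ((n + 1 : ℕ) : ℤ)
          - Polynomial.Chebyshev.U ℝ (n : ℤ) := by
      push_cast; exact Polynomial.Chebyshev.U_add_two ℝ (n : ℤ)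
    rw [hrec]
    simp only [eval_sub, eval_mul, eval_ofNat, eval_X, ih1, ih2]
    push_cast; ring




lemma nodes_injOn (k : ℕ) (hk : 0 < k) :
    Set.InjOn (fun j : ℕ => Real.cos (j * π / k)) (Finset.range (k+1)) := by
  intro a ha b hb hab
  simp only [coe_range, Set.mem_Iio] at ha hb
  have hmem : ∀ j : ℕ, j < k + 1 → (j * π / k : ℝ) ∈ Set.Icc 0 π := by
    intro j hj
    constructor
    · positivity
    · rw [div_le_iff₀ (by positivity)]
      have : (j : ℝ) ≤ k := by exact_mod_cast Nat.lt_succ_iff.mp hj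
      nlinarith [pi_pos]
  have := Real.injOn_cos (hmem a ha) (hmem b hb) hab
  have hπ : (0:ℝ) < π / k := by positivity
  field_simp at this
  have : (a:ℝ) = b := by
    exact this
  exact_mod_cast this

lemma sin_k_node (k : ℕ) (hk : 0 < k) (j : ℕ) :
    Real.sin ((((((k - 1 : ℕ) : ℤ) : ℝ)) + 1) * (j * π / k)) = 0 := by
  have h1 : (((((k - 1 : ℕ) : ℤ) : ℝ)) + 1) = (k : ℝ) := by
    push_cast [Nat.cast_sub hk]
    ring
  rw [h1]
  have : (k : ℝ) * (j * π / k) = j * π := by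
    field_simp
  rw [this, Real.sin_nat_mul_pi]

lemma key_poly (k : ℕ) (hk : 0 < k) :
    C ((2:ℝ)^(k-1)) * ∏ j ∈ Finset.range (k + 1), (X - C (Real.cos (j * π / k)))
      = (X ^ 2 - 1) * Polynomial.Chebyshev.U ℝ ((k - 1 : ℕ) : ℤ) := by
  set P : ℝ[X] := ∏ j ∈ Finset.range (k+1), (X - C (Real.cos (j * π / k))) with hP
  have hPm : P.Monic := monic_prod_of_monic _ _ fun j _ => monic_X_sub_C _
  have hPdeg : P.natDegree = k + 1 := by
    rw [hP, natDegree_prod_of_monic _ _ fun j _ => monic_X_sub_C _]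
    simp
  set A := C ((2:ℝ)^(k-1)) * P with hA
  set B := (X^2 - 1 : ℝ[X]) * Polynomial.Chebyshev.U ℝ ((k - 1 : ℕ) : ℤ) with hB
  have hc : (2:ℝ)^(k-1) ≠ 0 := by positivity
  have hAdeg : A.natDegree = k+1 := by rw [hA, natDegree_C_mul hc, hPdeg]
  have hAlc : A.leadingCoeff = 2^(k-1) := by
    rw [hA, leadingCoeff_mul, leadingCoeff_C, hPm.leadingCoeff, mul_one]
  have hA0 : A ≠ 0 := fun h => hc (by rw [h, leadingCoeff_zero] at hAlc; exact hAlc.symm)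
  have hX2m : (X^2 - 1 : ℝ[X]).Monic := by
    have := monic_X_pow_sub_C (1:ℝ) (two_ne_zero)
    simpa using this
  have hX20 : (X^2 - 1 : ℝ[X]) ≠ 0 := hX2m.ne_zero
  have hX2deg : (X^2 - 1 : ℝ[X]).natDegree = 2 := by
    have := natDegree_X_pow_sub_C (n := 2) (r := (1:ℝ))
    simpa using this
  have hBdeg : B.natDegree = k+1 := by
    rw [hB, natDegree_mul hX20 (U_ne_zero _), hX2deg, U_natDegree]
    omega
  have hBlc : B.leadingCoeff = 2^(k-1) := by
    rw [hB, leadingCoeff_mul, hX2m.leadingCoeff, one_mul, U_leadingCoeff]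
  have hB0 : B ≠ 0 := fun h => hc (by rw [h, leadingCoeff_zero] at hBlc; exact hBlc.symm)
  rw [← sub_eq_zero]
  by_cases h0 : A - B = 0
  · exact h0
  have hdeg : (A - B).degree < ((k+1 : ℕ) : WithBot ℕ) := by
    have := degree_sub_lt (by rw [degree_eq_natDegree hA0, degree_eq_natDegree hB0, hAdeg, hBdeg])
      hA0 (hAlc.trans hBlc.symm)
    rwa [degree_eq_natDegree hA0, hAdeg] at this
  apply eq_zero_of_natDegree_lt_card_of_eval_eq_zero' _
    ((Finset.range (k+1)).image fun j : ℕ => Real.cos (j * π / k))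
  · rintro x hx
    simp only [mem_image, mem_range] at hx
    obtain ⟨j, hj, rfl⟩ := hx
    have hevalA : eval (Real.cos (j * π / k)) A = 0 := by
      rw [hA, eval_mul, hP, eval_prod]
      have : ∏ j' ∈ Finset.range (k+1), eval (Real.cos (j * π / k)) (X - C (Real.cos (j' * π / k))) = 0 :=
        Finset.prod_eq_zero (Finset.mem_range.mpr hj) (by simp)
      rw [this, mul_zero]
    have hevalB : eval (Real.cos (j * π / k)) B = 0 := by
      have hU := Polynomial.Chebyshev.U_real_cos (j * π / k) ((k - 1 : ℕ) : ℤ)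
      rw [sin_k_node k hk j] at hU
      have hs := Real.sin_sq_add_cos_sq (j * π / k)
      rw [hB, eval_mul, eval_sub, eval_pow, eval_X, eval_one]
      linear_combination (-(Real.sin (↑j * π / ↑k))) * hU
        + eval (Real.cos (↑j * π / ↑k)) (Polynomial.Chebyshev.U ℝ ((k-1:ℕ):ℤ)) * hs
    rw [eval_sub, hevalA, hevalB, sub_zero]
  · rw [Finset.card_image_of_injOn (nodes_injOn k hk), Finset.card_range]
    exact (natDegree_lt_iff_degree_lt h0).mpr hdeg




lemma cast_k_sub_one (k : ℕ) (hk : 0 < k) : (((k - 1 : ℕ) : ℤ) : ℝ) + 1 = (k : ℝ) := by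
  push_cast [Nat.cast_sub hk]
  ring

lemma eval_prod_eq (k : ℕ) (hk : 0 < k) (θ : ℝ) :
    (2:ℝ)^(k-1) * ∏ j ∈ Finset.range (k + 1), (Real.cos θ - Real.cos (j * π / k))
      = -(Real.sin θ * Real.sin (k * θ)) := by
  have h := congrArg (eval (Real.cos θ)) (key_poly k hk)
  simp only [eval_mul, eval_C, eval_prod, eval_sub, eval_X, eval_pow, eval_one] at h
  have hU := Polynomial.Chebyshev.U_real_cos θ ((k - 1 : ℕ) : ℤ)
  rw [cast_k_sub_one k hk] at hU
  have hs := Real.sin_sq_add_cos_sq θ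
  rw [h]
  linear_combination (-(Real.sin θ)) * hU
    + eval (Real.cos θ) (Polynomial.Chebyshev.U ℝ ((k-1:ℕ):ℤ)) * hs

-- derivative identity for U along cos
lemma U_deriv_identity (k : ℕ) (hk : 0 < k) (φ : ℝ) :
    eval (Real.cos φ) (derivative (Polynomial.Chebyshev.U ℝ ((k - 1 : ℕ) : ℤ)))
        * (-Real.sin φ) * Real.sin φ
      + eval (Real.cos φ) (Polynomial.Chebyshev.U ℝ ((k - 1 : ℕ) : ℤ)) * Real.cos φ
      = Real.cos (k * φ) * k := by
  set U := Polynomial.Chebyshev.U ℝ ((k - 1 : ℕ) : ℤ) with hUdef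
  have h1 : HasDerivAt (fun θ => eval (Real.cos θ) U)
      (eval (Real.cos φ) (derivative U) * (-Real.sin φ)) φ := by
    exact (U.hasDerivAt (Real.cos φ)).comp φ (Real.hasDerivAt_cos φ)
  have h2 : HasDerivAt (fun θ => eval (Real.cos θ) U * Real.sin θ)
      (eval (Real.cos φ) (derivative U) * (-Real.sin φ) * Real.sin φ
        + eval (Real.cos φ) U * Real.cos φ) φ := h1.mul (Real.hasDerivAt_sin φ)
  have h3 : (fun θ => eval (Real.cos θ) U * Real.sin θ) = fun θ => Real.sin (k * θ) := by
    funext θ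
    have hU := Polynomial.Chebyshev.U_real_cos θ ((k - 1 : ℕ) : ℤ)
    rw [cast_k_sub_one k hk] at hU
    exact hU
  rw [h3] at h2
  have h4 : HasDerivAt (fun θ : ℝ => Real.sin ((k:ℝ) * θ)) (Real.cos ((k:ℝ) * φ) * k) φ := by
    have := (Real.hasDerivAt_sin ((k:ℝ) * φ)).comp φ ((hasDerivAt_id φ).const_mul (k:ℝ))
    have heq : (Real.sin ∘ fun θ : ℝ => (k:ℝ) * θ) = fun θ : ℝ => Real.sin ((k:ℝ) * θ) := rfl
    rw [heq] at this
    rw [mul_one] at this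
    exact this
  exact h2.unique h4




lemma node_val (k : ℕ) (hk : 0 < k) (i : ℕ) (hik : i ≤ k) :
    (k : ℝ) / 2^(k-1)
      ≤ |∏ j ∈ Finset.range (k+1) \ {i}, (Real.cos (i*π/k) - Real.cos (j*π/k))| := by
  have hc : (0:ℝ) < 2^(k-1) := by positivity
  set t := Real.cos (i*π/k) with ht
  set U := Polynomial.Chebyshev.U ℝ ((k - 1 : ℕ) : ℤ) with hUdef
  set Q : ℝ[X] := ∏ j ∈ Finset.range (k+1) \ {i}, (X - C (Real.cos (j*π/k))) with hQ
  have hQeval : eval t Q = ∏ j ∈ Finset.range (k+1) \ {i}, (t - Real.cos (j*π/k)) := by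
    simp [hQ, eval_prod]
  have hfact : ∏ j ∈ Finset.range (k+1), (X - C (Real.cos (j*π/k)))
      = (X - C t) * Q :=
    Finset.prod_eq_mul_prod_sdiff_singleton_of_mem (Finset.mem_range.mpr (by omega)) _
  -- differentiate the key identity and evaluate at t
  have hD := congrArg derivative (key_poly k hk)
  rw [hfact] at hD
  have heq : (2:ℝ)^(k-1) * eval t Q
      = 2 * t * eval t U + (t^2 - 1) * eval t (derivative U) := by
    have h2 := congrArg (eval t) hD
    simp only [derivative_C_mul, derivative_mul, derivative_sub, derivative_X, derivative_C,
      derivative_one, derivative_X_pow, eval_mul, eval_add, eval_sub, eval_C, eval_X, eval_pow,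
      eval_one, eval_zero, ← hUdef] at h2
    ring_nf at h2 ⊢
    linarith [h2]
  -- now case on i
  rcases Nat.eq_zero_or_pos i with hi0 | hi1
  · -- i = 0 : t = 1
    subst hi0
    have ht1 : t = 1 := by simp [ht]
    rw [ht1] at heq
    have hUone : eval 1 U = (k:ℝ) := by
      rw [hUdef, U_eval_one (k-1)]
      have : ((k-1:ℕ):ℝ) + 1 = (k:ℝ) := by
        push_cast [Nat.cast_sub hk]; ring
      exact this
    rw [hUone] at heq
    have habs : |eval t Q| = 2*(k:ℝ)/2^(k-1) := by
      rw [ht1]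
      have hv : eval 1 Q = 2*(k:ℝ)/2^(k-1) := by
        field_simp at heq ⊢
        linarith
      rw [hv, abs_div, abs_of_pos hc, abs_of_nonneg (by positivity)]
    rw [← hQeval, habs]
    rw [div_le_div_iff_of_pos_right hc]
    have : (0:ℝ) ≤ (k:ℝ) := Nat.cast_nonneg k
    linarith
  rcases Nat.lt_or_ge i k with hikk | hike
  · -- interior
    have hφ0 : 0 < (i:ℝ)*π/k := by
      have : (0:ℝ) < (i:ℝ) := by exact_mod_cast hi1
      positivity
    have hφπ : (i:ℝ)*π/k < π := by
      rw [div_lt_iff₀ (by exact_mod_cast hk)]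
      have : (i:ℝ) < k := by exact_mod_cast hikk
      nlinarith [pi_pos]
    have hsin : 0 < Real.sin ((i:ℝ)*π/k) := Real.sin_pos_of_pos_of_lt_pi hφ0 hφπ
    have hkφ : (k:ℝ) * ((i:ℝ)*π/k) = i*π := by
      field_simp
    have hU0 : eval t U = 0 := by
      have hU := Polynomial.Chebyshev.U_real_cos ((i:ℝ)*π/k) ((k - 1 : ℕ) : ℤ)
      rw [cast_k_sub_one k hk, hkφ, Real.sin_nat_mul_pi] at hU
      rcases mul_eq_zero.mp hU with h | h
      · exact h
      · exact absurd h hsin.ne'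
    have hDI := U_deriv_identity k hk ((i:ℝ)*π/k)
    rw [hkφ, ← hUdef, hU0] at hDI
    have hs := Real.sin_sq_add_cos_sq ((i:ℝ)*π/k)
    have hcos : |Real.cos ((i:ℝ)*π)| = 1 := by
      have := Real.abs_cos_int_mul_pi (i:ℤ)
      push_cast at this
      exact this
    have heq2 : (2:ℝ)^(k-1) * eval t Q = Real.cos (i*π) * k := by
      rw [heq, hU0]
      have ht2 : t = Real.cos ((i:ℝ)*π/k) := ht
      rw [ht2]
      linear_combination hDI + (eval (Real.cos ((i:ℝ)*π/k)) (derivative U)) * hs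
    have habs : |eval t Q| = (k:ℝ)/2^(k-1) := by
      have : eval t Q = Real.cos (i*π) * k / 2^(k-1) := by
        field_simp at heq2 ⊢
        linarith
      rw [this, abs_div, abs_of_pos hc, abs_mul, hcos, one_mul, Nat.abs_cast]
    rw [← hQeval, habs]
  · -- i = k : t = -1
    have hik' : i = k := le_antisymm hik hike
    subst hik'
    have htneg : t = -1 := by
      rw [ht]
      have : (i:ℝ)*π/i = π := by
        field_simp
      rw [this, Real.cos_pi]
    rw [htneg] at heq
    have hUneg : eval (-1) U = (-1:ℝ)^(i-1) * i := by
      rw [hUdef, U_eval_neg_one (i-1)]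
      have : ((i-1:ℕ):ℝ) + 1 = (i:ℝ) := by
        push_cast [Nat.cast_sub hk]; ring
      rw [this]
    rw [hUneg] at heq
    have habs : |eval t Q| = 2*(i:ℝ)/2^(i-1) := by
      rw [htneg]
      have hv : eval (-1) Q = 2 * (-1)^(i-1+1) * i / 2^(i-1) := by
        field_simp at heq ⊢
        ring_nf at heq ⊢
        linarith
      rw [hv, abs_div, abs_of_pos hc, abs_mul, abs_mul]
      simp [abs_pow]
    rw [← hQeval, habs]
    rw [div_le_div_iff_of_pos_right hc]
    have : (0:ℝ) ≤ (i:ℝ) := Nat.cast_nonneg i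
    linarith




lemma abs_sin_nat_mul_le (n : ℕ) (x : ℝ) : |Real.sin (n * x)| ≤ n * |Real.sin x| := by
  induction n with
  | zero => simp
  | succ n ih =>
    have h : ((n+1:ℕ):ℝ) * x = n * x + x := by push_cast; ring
    rw [h, Real.sin_add]
    refine (abs_add_le _ _).trans ?_
    push_cast
    have h1 : |Real.sin (n*x) * Real.cos x| ≤ |Real.sin (n*x)| := by
      rw [abs_mul]
      exact mul_le_of_le_one_right (abs_nonneg _) (Real.abs_cos_le_one x)
    have h2 : |Real.cos (n*x) * Real.sin x| ≤ |Real.sin x| := by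
      rw [abs_mul]
      exact mul_le_of_le_one_left (abs_nonneg _) (Real.abs_cos_le_one _)
    nlinarith [ih, abs_nonneg (Real.sin x)]

lemma abs_sin_le_two_abs_sin_half (x : ℝ) : |Real.sin x| ≤ 2 * |Real.sin (x/2)| := by
  have h : Real.sin x = 2 * Real.sin (x/2) * Real.cos (x/2) := by
    rw [← Real.sin_two_mul]
    congr 1
    ring
  rw [h, abs_mul, abs_mul]
  have h1 := Real.abs_cos_le_one (x/2)
  have h2 : |(2:ℝ)| = 2 := by norm_num
  rw [h2]
  nlinarith [abs_nonneg (Real.sin (x/2)), abs_nonneg (Real.cos (x/2))]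

-- sin u * cos u ≤ sin (u + v) for u, v ∈ [0, π/2]
lemma sin_mul_cos_le (u v : ℝ) (hu : u ∈ Set.Icc 0 (π/2)) (hv : v ∈ Set.Icc 0 (π/2)) :
    Real.sin u * Real.cos u ≤ Real.sin (u + v) := by
  obtain ⟨hu0, hu1⟩ := hu
  obtain ⟨hv0, hv1⟩ := hv
  rw [Real.sin_add]
  have hsu : 0 ≤ Real.sin u := Real.sin_nonneg_of_nonneg_of_le_pi hu0 (by linarith [pi_pos])
  have hsv : 0 ≤ Real.sin v := Real.sin_nonneg_of_nonneg_of_le_pi hv0 (by linarith [pi_pos])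
  have hcu : 0 ≤ Real.cos u := Real.cos_nonneg_of_mem_Icc ⟨by linarith, hu1⟩
  have hcv : 0 ≤ Real.cos v := Real.cos_nonneg_of_mem_Icc ⟨by linarith, hv1⟩
  rcases le_or_gt (Real.cos u) (Real.cos v) with h | h
  · nlinarith
  · have huv : u ≤ v := by
      by_contra hcon
      push_neg at hcon
      have := Real.cos_le_cos_of_nonneg_of_le_pi hv0 (by linarith [pi_pos]) hcon.le
      linarith
    have : Real.sin u ≤ Real.sin v :=
      Real.sin_le_sin_of_le_of_le_pi_div_two (by linarith) hv1 huv
    nlinarith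

lemma trig_bound (k : ℕ) (hk : 0 < k) (i : ℕ) (hik : i ≤ k) (θ : ℝ)
    (hθ : θ ∈ Set.Ioo 0 π) :
    |Real.sin θ * Real.sin (k * θ)|
      ≤ 2 * k * |Real.cos θ - Real.cos (i * π / k)| := by
  obtain ⟨hθ0, hθπ⟩ := hθ
  set φ := (i:ℝ) * π / k with hφ
  have hφ0 : 0 ≤ φ := by positivity
  have hφπ : φ ≤ π := by
    rw [hφ, div_le_iff₀ (by exact_mod_cast hk)]
    have : (i:ℝ) ≤ k := by exact_mod_cast hik
    nlinarith [pi_pos]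
  -- part a: |sin θ| ≤ 2 |sin ((θ+φ)/2)|
  have hpa : |Real.sin θ| ≤ 2 * |Real.sin ((θ+φ)/2)| := by
    have h1 : Real.sin θ = 2 * Real.sin (θ/2) * Real.cos (θ/2) := by
      rw [← Real.sin_two_mul]; congr 1; ring
    have h2 : Real.sin (θ/2) * Real.cos (θ/2) ≤ Real.sin (θ/2 + φ/2) :=
      sin_mul_cos_le (θ/2) (φ/2) ⟨by linarith, by linarith⟩ ⟨by linarith, by linarith⟩
    have h3 : (θ+φ)/2 = θ/2 + φ/2 := by ring
    have hs1 : 0 ≤ Real.sin θ := Real.sin_nonneg_of_nonneg_of_le_pi hθ0.le hθπ.le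
    have hs2 : 0 ≤ Real.sin ((θ+φ)/2) :=
      Real.sin_nonneg_of_nonneg_of_le_pi (by linarith) (by linarith)
    rw [abs_of_nonneg hs1, abs_of_nonneg hs2, h3]
    linarith [h1, h2]
  -- part b: |sin (kθ)| ≤ 2k |sin ((θ-φ)/2)|
  have hpb : |Real.sin (k * θ)| ≤ 2 * k * |Real.sin ((θ-φ)/2)| := by
    have hkφ : (k:ℝ) * φ = i * π := by
      rw [hφ]; field_simp
    have h1 : (k:ℝ) * θ = k * (θ - φ) + i * π := by
      rw [← hkφ]; ring
    have h2 : |Real.sin ((k:ℝ) * θ)| = |Real.sin ((k:ℝ) * (θ - φ))| := by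
      rw [h1]
      have := Real.sin_add_nat_mul_pi ((k:ℝ) * (θ - φ)) i
      rw [this, abs_mul, abs_pow, abs_neg, abs_one, one_pow, one_mul]
    rw [h2]
    calc |Real.sin ((k:ℝ) * (θ - φ))| ≤ k * |Real.sin (θ - φ)| := abs_sin_nat_mul_le k _
      _ ≤ k * (2 * |Real.sin ((θ-φ)/2)|) := by
          have := abs_sin_le_two_abs_sin_half (θ - φ)
          have hk0 : (0:ℝ) ≤ k := Nat.cast_nonneg k
          nlinarith
      _ = 2 * k * |Real.sin ((θ-φ)/2)| := by ring
  -- combine via cos_sub_cos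
  have hcc : Real.cos θ - Real.cos φ = -2 * Real.sin ((θ+φ)/2) * Real.sin ((θ-φ)/2) :=
    Real.cos_sub_cos θ φ
  have habs : |Real.cos θ - Real.cos φ| = 2 * |Real.sin ((θ+φ)/2)| * |Real.sin ((θ-φ)/2)| := by
    rw [hcc]
    rw [abs_mul, abs_mul]
    norm_num
  rw [abs_mul, habs]
  have hk0 : (0:ℝ) ≤ k := Nat.cast_nonneg k
  nlinarith [abs_nonneg (Real.sin θ), abs_nonneg (Real.sin ((k:ℝ)*θ)),
    abs_nonneg (Real.sin ((θ+φ)/2)), abs_nonneg (Real.sin ((θ-φ)/2)), hpa, hpb]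


end ChebBoundAux

theorem chebyshev_lagrange_basis_bound (k : ℕ) (hk : 0 < k) :
    ∀ i ∈ Finset.range (k + 1), ∀ t ∈ Set.Ioo (-1 : ℝ) 1,
      |(∏ j ∈ Finset.range (k + 1) \ {i}, (t - Real.cos (j * π / k))) /
        (∏ j ∈ Finset.range (k + 1) \ {i},
          (Real.cos (i * π / k) - Real.cos (j * π / k)))| ≤ 2 := by
  intro i hi t ht
  have hik : i ≤ k := Nat.lt_succ_iff.mp (Finset.mem_range.mp hi)
  obtain ⟨ht1, ht2⟩ := ht
  have hc : (0:ℝ) < 2^(k-1) := by positivity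
  have hkpos : (0:ℝ) < k := by exact_mod_cast hk
  have hD : (k:ℝ)/2^(k-1)
      ≤ |∏ j ∈ Finset.range (k+1) \ {i}, (Real.cos (i*π/k) - Real.cos (j*π/k))| :=
    ChebBoundAux.node_val k hk i hik
  have hDpos : 0 < |∏ j ∈ Finset.range (k+1) \ {i},
      (Real.cos (i*π/k) - Real.cos (j*π/k))| := lt_of_lt_of_le (by positivity) hD
  have hD0 : (∏ j ∈ Finset.range (k+1) \ {i},
      (Real.cos (i*π/k) - Real.cos (j*π/k))) ≠ 0 := by
    intro h
    rw [h] at hDpos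
    simp at hDpos
  by_cases hti : t = Real.cos (i*π/k)
  · rw [hti, div_self hD0]
    norm_num
  · set θ := Real.arccos t with hθdef
    have hθcos : Real.cos θ = t := Real.cos_arccos ht1.le ht2.le
    have hθ0 : 0 < θ := Real.arccos_pos.mpr ht2
    have hθπ : θ < π := by
      rcases lt_or_eq_of_le (Real.arccos_le_pi t) with h | h
      · exact h
      · exfalso
        have : t = -1 := by rw [← hθcos, hθdef, h, Real.cos_pi]
        linarith
    have hTB := ChebBoundAux.trig_bound k hk i hik θ ⟨hθ0, hθπ⟩
    rw [hθcos] at hTB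
    have hEP := ChebBoundAux.eval_prod_eq k hk θ
    rw [hθcos] at hEP
    have hsplit : ∏ j ∈ Finset.range (k+1), (t - Real.cos (j*π/k))
        = (t - Real.cos (i*π/k)) * ∏ j ∈ Finset.range (k+1) \ {i}, (t - Real.cos (j*π/k)) :=
      Finset.prod_eq_mul_prod_sdiff_singleton_of_mem hi _
    rw [hsplit] at hEP
    have habs_ti : 0 < |t - Real.cos (i*π/k)| := abs_pos.mpr (sub_ne_zero.mpr hti)
    have hNb : |∏ j ∈ Finset.range (k+1) \ {i}, (t - Real.cos (j*π/k))| ≤ 2*k/2^(k-1) := by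
      have h1 : 2^(k-1) * (|t - Real.cos (i*π/k)|
          * |∏ j ∈ Finset.range (k+1) \ {i}, (t - Real.cos (j*π/k))|)
          ≤ 2*k*|t - Real.cos (i*π/k)| := by
        have h2 := congrArg abs hEP
        rw [abs_mul, abs_mul, abs_neg, abs_of_pos hc] at h2
        rw [h2]
        exact hTB
      rw [le_div_iff₀ hc]
      nlinarith [abs_nonneg (∏ j ∈ Finset.range (k+1) \ {i}, (t - Real.cos (j*π/k)))]
    rw [abs_div, div_le_iff₀ hDpos]
    calc |∏ j ∈ Finset.range (k+1) \ {i}, (t - Real.cos (j*π/k))|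
        ≤ 2*k/2^(k-1) := hNb
      _ = 2 * ((k:ℝ)/2^(k-1)) := by ring
      _ ≤ 2 * |∏ j ∈ Finset.range (k+1) \ {i},
            (Real.cos (i*π/k) - Real.cos (j*π/k))| := by linarith [hD]
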